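/- arXiv:1607.02862 — 4 statements merged into one kernel-verified Lean document; each statement's English description precedes it below -/
import Mathlib

section
/- Suppose α* > 2, ρ* = 1 and F*² = 1 + (1-α*)². Then the matrix L₊ (case β = 1) has exactly two purely imaginary eigenvalues ±iω* with ω* = √(α*-2), each algebraically double and geometrically simple. -/
open Matrix

lemma ker_aux (a b c d μ : ℂ) (hb : b ≠ 0)
    (hdet : c * b = (a - μ ^ 2) * (d - μ ^ 2)) :
    Module.finrank ℂ (LinearMap.ker
      ((!![0, 1, 0, 0; a, 0, b, 0; 0, 0, 0, 1; c, 0, d, 0]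
        - μ • (1 : Matrix (Fin 4) (Fin 4) ℂ)).mulVecLin)) = 1 := by
  set v : Fin 4 → ℂ := ![b, μ * b, -(a - μ ^ 2), -μ * (a - μ ^ 2)] with hv
  have hker : LinearMap.ker
      ((!![0, 1, 0, 0; a, 0, b, 0; 0, 0, 0, 1; c, 0, d, 0]
        - μ • (1 : Matrix (Fin 4) (Fin 4) ℂ)).mulVecLin) = Submodule.span ℂ {v} := by
    apply le_antisymm
    · intro x hx
      rw [LinearMap.mem_ker, Matrix.mulVecLin_apply] at hx
      have e0 := congrFun hx 0
      have e1 := congrFun hx 1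
      have e2 := congrFun hx 2
      simp [Matrix.mulVec, dotProduct, Fin.sum_univ_four, Matrix.sub_apply,
        Matrix.smul_apply, Matrix.one_apply] at e0 e1 e2
      refine (Submodule.smul_mem_iff _ hb).mp ?_
      refine Submodule.mem_span_singleton.mpr ⟨x 0, ?_⟩
      funext i
      fin_cases i
      · simp [hv, Pi.smul_apply, smul_eq_mul]
        ring_nf
      · simp [hv, Pi.smul_apply, smul_eq_mul]
        linear_combination -b * e0
      · simp [hv, Pi.smul_apply, smul_eq_mul]
        linear_combination -e1 - μ * e0
      · simp [hv, Pi.smul_apply, smul_eq_mul]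
        linear_combination -(b * e2) - μ * e1 - μ ^ 2 * e0
    · rw [Submodule.span_le, Set.singleton_subset_iff]
      rw [SetLike.mem_coe, LinearMap.mem_ker, Matrix.mulVecLin_apply]
      funext i
      fin_cases i <;>
        simp [hv, Matrix.mulVec, dotProduct, Fin.sum_univ_four, Matrix.sub_apply,
          Matrix.smul_apply, Matrix.one_apply]
      · ring
      · ring
      · linear_combination hdet
  rw [hker]
  refine finrank_span_singleton ?_
  intro h
  apply hb
  simpa [hv] using congrFun h 0



theorem stmt_9 (α F : ℝ) (hα : 2 < α) (hF : 0 < F) (hF2 : F ^ 2 = 1 + (1 - α) ^ 2)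
    (ψr ψi ω : ℝ)
    (hψr : ψr = F / (1 + (1 - α) ^ 2)) (hψi : ψi = F * (1 - α) / (1 + (1 - α) ^ 2))
    (hω : ω = Real.sqrt (α - 2))
    (L : Matrix (Fin 4) (Fin 4) ℂ)
    (hL : L = !![0, 1, 0, 0;
                 ((3 * ψr ^ 2 + ψi ^ 2 - α : ℝ) : ℂ), 0, ((2 * ψr * ψi - 1 : ℝ) : ℂ), 0;
                 0, 0, 0, 1;
                 ((2 * ψr * ψi + 1 : ℝ) : ℂ), 0, ((ψr ^ 2 + 3 * ψi ^ 2 - α : ℝ) : ℂ), 0]) :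
    -- the spectrum consists exactly of ±iω, each with algebraic multiplicity two
    (∀ X : ℂ, Matrix.det (X • (1 : Matrix (Fin 4) (Fin 4) ℂ) - L) =
      (X - Complex.I * ω) ^ 2 * (X + Complex.I * ω) ^ 2) ∧
    -- each eigenvalue ±iω is geometrically simple
    Module.finrank ℂ (LinearMap.ker
      ((L - (Complex.I * ω) • (1 : Matrix (Fin 4) (Fin 4) ℂ)).mulVecLin)) = 1 ∧
    Module.finrank ℂ (LinearMap.ker
      ((L + (Complex.I * ω) • (1 : Matrix (Fin 4) (Fin 4) ℂ)).mulVecLin)) = 1 := by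
  have hs : (0:ℝ) < 1 + (1 - α) ^ 2 := by positivity
  have r1 : ψr ^ 2 + ψi ^ 2 = 1 := by
    rw [hψr, hψi]
    field_simp
    linear_combination hF2
  have rω : ω ^ 2 = α - 2 := by
    rw [hω]; exact Real.sq_sqrt (by linarith)
  have hd : ψr - ψi = F * α / (1 + (1 - α) ^ 2) := by rw [hψr, hψi]; ring
  have hd' : 0 < ψr - ψi := by
    rw [hd]; exact div_pos (mul_pos hF (by linarith)) hs
  have rb : 2 * ψr * ψi - 1 ≠ 0 := by
    have : 2 * ψr * ψi - 1 < 0 := by nlinarith [mul_pos hd' hd']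
    exact ne_of_lt this
  have rdet : (2 * ψr * ψi + 1) * (2 * ψr * ψi - 1) =
      (3 * ψr ^ 2 + ψi ^ 2 - α + ω ^ 2) * (ψr ^ 2 + 3 * ψi ^ 2 - α + ω ^ 2) := by
    linear_combination (2 - 3 * (ψr ^ 2 + ψi ^ 2 - 1) - 2 * (ω ^ 2 - α + 2)) * r1 +
      (-2 * (ψr ^ 2 + ψi ^ 2 - 1) - (ω ^ 2 - α + 2)) * rω
  have e1 : (ψr : ℂ) ^ 2 + (ψi : ℂ) ^ 2 = 1 := by exact_mod_cast r1
  have e2 : (ω : ℂ) ^ 2 = (α : ℂ) - 2 := by exact_mod_cast rω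
  have hbC : ((2 * ψr * ψi - 1 : ℝ) : ℂ) ≠ 0 := by
    exact_mod_cast Complex.ofReal_ne_zero.mpr rb
  have hI : (Complex.I * (ω : ℂ)) ^ 2 = -((ω : ℝ) : ℂ) ^ 2 := by
    rw [mul_pow, Complex.I_sq]; ring
  have rdetC : ((2 * ψr * ψi + 1 : ℝ) : ℂ) * ((2 * ψr * ψi - 1 : ℝ) : ℂ) =
      (((3 * ψr ^ 2 + ψi ^ 2 - α : ℝ) : ℂ) + ((ω : ℝ) : ℂ) ^ 2) *
      (((ψr ^ 2 + 3 * ψi ^ 2 - α : ℝ) : ℂ) + ((ω : ℝ) : ℂ) ^ 2) := by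
    exact_mod_cast congrArg (fun t : ℝ => (t : ℂ)) rdet
  refine ⟨?_, ?_, ?_⟩
  · intro X
    subst hL
    have hN : (X • (1 : Matrix (Fin 4) (Fin 4) ℂ) -
        !![0, 1, 0, 0;
           ((3 * ψr ^ 2 + ψi ^ 2 - α : ℝ) : ℂ), 0, ((2 * ψr * ψi - 1 : ℝ) : ℂ), 0;
           0, 0, 0, 1;
           ((2 * ψr * ψi + 1 : ℝ) : ℂ), 0, ((ψr ^ 2 + 3 * ψi ^ 2 - α : ℝ) : ℂ), 0]) =
        !![X, -1, 0, 0;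
           -((3 * ψr ^ 2 + ψi ^ 2 - α : ℝ) : ℂ), X, -((2 * ψr * ψi - 1 : ℝ) : ℂ), 0;
           0, 0, X, -1;
           -((2 * ψr * ψi + 1 : ℝ) : ℂ), 0, -((ψr ^ 2 + 3 * ψi ^ 2 - α : ℝ) : ℂ), X] := by
      ext i j
      fin_cases i <;> fin_cases j <;>
        simp [Matrix.sub_apply, Matrix.smul_apply, Matrix.one_apply,
          Matrix.vecHead, Matrix.vecTail]
    rw [hN]
    simp [Matrix.det_succ_row_zero, Fin.sum_univ_succ, Fin.succAbove,
      Matrix.vecHead, Matrix.vecTail]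
    have hI2 : Complex.I ^ 2 = -1 := Complex.I_sq
    linear_combination ((-4 : ℂ) * X ^ 2 + 3 * ((ψr : ℂ) ^ 2 + (ψi : ℂ) ^ 2) + 3 - 4 * (α : ℂ)) * e1 +
      ((-2 : ℂ) * X ^ 2 - (α : ℂ) + 2 - (ω : ℂ) ^ 2) * e2 +
      (2 * X ^ 2 * (ω : ℂ) ^ 2 + (ω : ℂ) ^ 4 * (1 - Complex.I ^ 2)) * hI2
  · subst hL
    refine ker_aux _ _ _ _ (Complex.I * (ω : ℂ)) hbC ?_
    rw [hI]
    linear_combination rdetC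
  · subst hL
    have hrw : (!![0, 1, 0, 0;
                 ((3 * ψr ^ 2 + ψi ^ 2 - α : ℝ) : ℂ), 0, ((2 * ψr * ψi - 1 : ℝ) : ℂ), 0;
                 0, 0, 0, 1;
                 ((2 * ψr * ψi + 1 : ℝ) : ℂ), 0, ((ψr ^ 2 + 3 * ψi ^ 2 - α : ℝ) : ℂ), 0]
        + (Complex.I * (ω : ℂ)) • (1 : Matrix (Fin 4) (Fin 4) ℂ))
        = (!![0, 1, 0, 0;
                 ((3 * ψr ^ 2 + ψi ^ 2 - α : ℝ) : ℂ), 0, ((2 * ψr * ψi - 1 : ℝ) : ℂ), 0;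
                 0, 0, 0, 1;
                 ((2 * ψr * ψi + 1 : ℝ) : ℂ), 0, ((ψr ^ 2 + 3 * ψi ^ 2 - α : ℝ) : ℂ), 0]
        - (-(Complex.I * (ω : ℂ))) • (1 : Matrix (Fin 4) (Fin 4) ℂ)) := by
      rw [neg_smul, sub_neg_eq_add]
    rw [hrw]
    refine ker_aux _ _ _ _ (-(Complex.I * (ω : ℂ))) hbC ?_
    have : (-(Complex.I * (ω : ℂ))) ^ 2 = -((ω : ℝ) : ℂ) ^ 2 := by
      rw [neg_pow, hI]; ring
    rw [this]
    linear_combination rdetC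
end

section
/- With ω* = √(α*-2), α* > 2, ρ* = 1, C = α*/(2-α*), the vector ζ₀ = (C, iω*C, 1, iω*)ᵀ satisfies L₊ζ₀ = iω*ζ₀, and the vector ζ₁ = (2iω*/(1+2ψᵣ*ψᵢ*), C - 2ω*²/(1+2ψᵣ*ψᵢ*), 0, 1)ᵀ satisfies (L₊ - iω*)ζ₁ = ζ₀; moreover Sζ₀ = conj(ζ₀) and Sζ₁ = -conj(ζ₁) for S = diag(1,-1,1,-1). -/
theorem stmt_10 (α F : ℝ) (hα : 2 < α) (hF : 0 < F) (hF2 : F ^ 2 = 1 + (1 - α) ^ 2)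
    (ψr ψi ω C : ℝ)
    (hψr : ψr = F / (1 + (1 - α) ^ 2)) (hψi : ψi = F * (1 - α) / (1 + (1 - α) ^ 2))
    (hω : ω = Real.sqrt (α - 2)) (hC : C = α / (2 - α))
    (L S : Matrix (Fin 4) (Fin 4) ℂ)
    (hL : L = !![0, 1, 0, 0;
                 ((3 * ψr ^ 2 + ψi ^ 2 - α : ℝ) : ℂ), 0, ((2 * ψr * ψi - 1 : ℝ) : ℂ), 0;
                 0, 0, 0, 1;
                 ((2 * ψr * ψi + 1 : ℝ) : ℂ), 0, ((ψr ^ 2 + 3 * ψi ^ 2 - α : ℝ) : ℂ), 0])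
    (hS : S = Matrix.diagonal ![1, -1, 1, -1])
    (ζ₀ ζ₁ : Fin 4 → ℂ)
    (hζ₀ : ζ₀ = ![(C : ℂ), Complex.I * ω * C, 1, Complex.I * ω])
    (hζ₁ : ζ₁ = ![2 * Complex.I * ω / (1 + 2 * ψr * ψi),
                  (C : ℂ) - 2 * ω ^ 2 / (1 + 2 * ψr * ψi), 0, 1]) :
    L.mulVec ζ₀ = (Complex.I * ω) • ζ₀ ∧
    L.mulVec ζ₁ - (Complex.I * ω) • ζ₁ = ζ₀ ∧
    S.mulVec ζ₀ = star ζ₀ ∧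
    S.mulVec ζ₁ = -star ζ₁ := by
  have hD : (0:ℝ) < 1 + (1 - α) ^ 2 := by positivity
  have hDne : (1 + (1 - α) ^ 2) ≠ 0 := ne_of_gt hD
  have hω2 : ω ^ 2 = α - 2 := by
    rw [hω, Real.sq_sqrt (by linarith)]
  have hr2 : ψr ^ 2 = 1 / (1 + (1 - α) ^ 2) := by
    rw [hψr]; field_simp; linear_combination hF2
  have hi2 : ψi ^ 2 = (1 - α) ^ 2 / (1 + (1 - α) ^ 2) := by
    rw [hψi]; field_simp; linear_combination ((1-α)^2) * hF2
  have hri : 2 * ψr * ψi = 2 * (1 - α) / (1 + (1 - α) ^ 2) := by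
    rw [hψr, hψi]; field_simp; linear_combination (1-α) * hF2
  -- P = 1 + 2 ψr ψi = (α-2)^2 / D > 0
  have hP : 1 + 2 * ψr * ψi = (α - 2) ^ 2 / (1 + (1 - α) ^ 2) := by
    rw [hri]; field_simp; ring
  have hPpos : (0:ℝ) < 1 + 2 * ψr * ψi := by
    rw [hP]; apply div_pos (by nlinarith) hD
  have hPne : ((1:ℂ) + 2 * ψr * ψi) ≠ 0 := by
    have : ((1 + 2 * ψr * ψi : ℝ) : ℂ) ≠ 0 := by
      exact_mod_cast ne_of_gt hPpos
    push_cast at this; exact this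
  have h2α : (2 - α) ≠ 0 := by linarith
  -- complex versions
  have cω2 : (ω:ℂ) ^ 2 = (α:ℂ) - 2 := by exact_mod_cast hω2
  have cr2 : (ψr:ℂ) ^ 2 * (1 + (1 - α) ^ 2) = 1 := by
    have : ψr ^ 2 * (1 + (1 - α)^2) = 1 := by rw [hr2]; field_simp
    exact_mod_cast this
  have ci2 : (ψi:ℂ) ^ 2 * (1 + (1 - α) ^ 2) = (1 - α) ^ 2 := by
    have : ψi ^ 2 * (1 + (1 - α)^2) = (1 - α)^2 := by rw [hi2]; field_simp
    exact_mod_cast this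
  have cri : 2 * (ψr:ℂ) * ψi * (1 + (1 - α) ^ 2) = 2 * (1 - α) := by
    have : 2 * ψr * ψi * (1 + (1 - α)^2) = 2 * (1 - α) := by rw [hri]; field_simp
    exact_mod_cast this
  have cC : (C:ℂ) * (2 - α) = α := by
    have : C * (2 - α) = α := by rw [hC]; field_simp
    exact_mod_cast this
  have cDne : ((1:ℂ) + (1 - α) ^ 2) ≠ 0 := by
    have : ((1 + (1 - α)^2 : ℝ) : ℂ) ≠ 0 := by exact_mod_cast hDne
    push_cast at this; exact this
  have c2α : ((2:ℂ) - α) ≠ 0 := by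
    have : ((2 - α : ℝ) : ℂ) ≠ 0 := by exact_mod_cast h2α
    push_cast at this; exact this
  subst hL hS hζ₀ hζ₁
  refine ⟨?_, ?_, ?_, ?_⟩ <;> funext i <;> fin_cases i
  all_goals try simp [Matrix.mulVec, dotProduct, Fin.sum_univ_four, Matrix.diagonal]
  all_goals try push_cast
  -- key real identities
  · -- A
    have kA : (3*ψr^2+ψi^2-α)*C + (2*ψr*ψi-1) = -(ω^2)*C := by
      rw [hr2, hi2, hri, hC, hω2]; field_simp; ring
    have cA : (3*(ψr:ℂ)^2+(ψi:ℂ)^2-(α:ℂ))*(C:ℂ) + (2*(ψr:ℂ)*(ψi:ℂ)-1) = -((ω:ℂ)^2)*(C:ℂ) := by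
      exact_mod_cast kA
    linear_combination cA + (-((ω:ℂ)^2)*(C:ℂ)) * Complex.I_sq
  · -- B
    have kB : (2*ψr*ψi+1)*C + (ψr^2+3*ψi^2-α) = -(ω^2) := by
      rw [hr2, hi2, hri, hC, hω2]; field_simp; ring
    have cB : (2*(ψr:ℂ)*(ψi:ℂ)+1)*(C:ℂ) + ((ψr:ℂ)^2+3*(ψi:ℂ)^2-(α:ℂ)) = -((ω:ℂ)^2) := by
      exact_mod_cast kB
    linear_combination cB + (-((ω:ℂ)^2)) * Complex.I_sq
  · -- C
    linear_combination (-2*(ω:ℂ)^2/(1+2*(ψr:ℂ)*(ψi:ℂ))) * Complex.I_sq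
  · -- D
    have kD : 3*ψr^2+ψi^2-α = C*(1+2*ψr*ψi) - ω^2 := by
      rw [hr2, hi2, hri, hC, hω2]; field_simp; ring
    have cD : 3*(ψr:ℂ)^2+(ψi:ℂ)^2-(α:ℂ) = (C:ℂ)*(1+2*(ψr:ℂ)*(ψi:ℂ)) - (ω:ℂ)^2 := by
      exact_mod_cast kD
    rw [cD]; field_simp
    ring
  · -- E
    field_simp
    ring
  · -- F
    ring
end

section
/- For α* > 2, γ* = √(α*²-3), and F* > 0, the coefficient b₁ = 3F*(2α*⁵ - 18α* + (2α*⁴ + 3α*² + 9)γ*)/(2(α*² + 3 + α*γ*)(α*³ - 9α* + (α*²+6)γ*)) is strictly positive. -/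
theorem stmt_17 (α F : ℝ) (hα : 2 < α) (hF : 0 < F)
    (γ : ℝ) (hγ : γ = Real.sqrt (α ^ 2 - 3)) :
    0 < 3 * F * (2 * α ^ 5 - 18 * α + (2 * α ^ 4 + 3 * α ^ 2 + 9) * γ) /
      (2 * (α ^ 2 + 3 + α * γ) * (α ^ 3 - 9 * α + (α ^ 2 + 6) * γ)) := by
  have h3 : (0:ℝ) < α ^ 2 - 3 := by nlinarith
  have hγpos : 0 < γ := by rw [hγ]; exact Real.sqrt_pos.mpr h3
  have hγ2 : γ ^ 2 = α ^ 2 - 3 := by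
    rw [hγ, Real.sq_sqrt h3.le]
  have hnum : 0 < 3 * F * (2 * α ^ 5 - 18 * α + (2 * α ^ 4 + 3 * α ^ 2 + 9) * γ) := by
    have : 0 < 2 * α ^ 5 - 18 * α + (2 * α ^ 4 + 3 * α ^ 2 + 9) * γ := by
      nlinarith [mul_pos hγpos (show (0:ℝ) < 2 * α ^ 4 + 3 * α ^ 2 + 9 by positivity),
        sq_nonneg α, sq_nonneg (α^2 - 4)]
    positivity
  have hd1 : 0 < α ^ 2 + 3 + α * γ := by nlinarith
  have hd2 : 0 < α ^ 3 - 9 * α + (α ^ 2 + 6) * γ := by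
    by_contra h
    push_neg at h
    have h9 : 0 < 9 * α - α ^ 3 := by nlinarith [mul_pos hγpos (show (0:ℝ) < α^2+6 by positivity)]
    have hsq : ((α^2+6)*γ) * ((α^2+6)*γ) ≤ (9*α - α^3) * (9*α - α^3) :=
      mul_self_le_mul_self (by positivity) (by linarith)
    nlinarith [sq_nonneg (α^2-4), sq_nonneg α, hγ2]
  positivity
end

section
/- Let a₁, b₁, c₁, μ, ω*, K be real numbers with b₁ ≠ 0, K ≥ 0 and (-a₁μ - c₁K)/b₁ ≥ 0. Set A_K = √((-a₁μ - c₁K)/b₁) and δ_K = √(b₁A_K/2) (assuming b₁A_K ≥ 0). Then A(x) = A_K(1 - 3 sech²(δ_K x)), B(x) = A'(x), C(x) = √K e^{i(ω*x + φ)} solves the truncated system A' = B, B' = a₁μ + b₁A² + c₁|C|², C' = iω*C, for any phase φ, and A(x) → A_K as |x| → ∞. -/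
open Real Filter

lemma cosh_top' : Tendsto Real.cosh atTop atTop :=
  tendsto_atTop_mono (fun x => by rw [Real.cosh_eq]; nlinarith [Real.exp_pos (-x)])
    (Real.tendsto_exp_atTop.atTop_div_const two_pos)

lemma cosh_bot' : Tendsto Real.cosh atBot atTop :=
  tendsto_atTop_mono (fun x => by simp only [Real.cosh_eq, Function.comp_apply]; nlinarith [Real.exp_pos x])
    ((Real.tendsto_exp_atTop.comp tendsto_neg_atBot_atTop).atTop_div_const two_pos)

theorem stmt_18 (a₁ b₁ c₁ μ ω K φ : ℝ) (hb : b₁ ≠ 0) (hK : 0 ≤ K)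
    (hpos : 0 ≤ (-a₁ * μ - c₁ * K) / b₁)
    (AK δ : ℝ) (hAK : AK = Real.sqrt ((-a₁ * μ - c₁ * K) / b₁))
    (hAKb : 0 ≤ b₁ * AK) (hδ : δ = Real.sqrt (b₁ * AK / 2))
    (A B : ℝ → ℝ) (C : ℝ → ℂ)
    (hA : A = fun x => AK * (1 - 3 * ((Real.cosh (δ * x))⁻¹) ^ 2))
    (hB : B = deriv A)
    (hC : C = fun (x : ℝ) => (Real.sqrt K : ℂ) * Complex.exp (Complex.I * (ω * x + φ))) :
    (∀ x : ℝ,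
      HasDerivAt A (B x) x ∧
      HasDerivAt B (a₁ * μ + b₁ * (A x) ^ 2 + c₁ * ‖C x‖ ^ 2) x ∧
      HasDerivAt C (Complex.I * ω * C x) x) ∧
    Filter.Tendsto A Filter.atTop (nhds AK) ∧
    Filter.Tendsto A Filter.atBot (nhds AK) := by
  have hc : ∀ x : ℝ, Real.cosh (δ * x) ≠ 0 := fun x => (Real.cosh_pos _).ne'
  have hcosh : ∀ x : ℝ, HasDerivAt (fun x : ℝ => Real.cosh (δ * x)) (Real.sinh (δ * x) * δ) x := by
    intro x
    have := (Real.hasDerivAt_cosh (δ * x)).comp x ((hasDerivAt_id x).const_mul δ)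
    simpa [Function.comp_def] using this
  have hsinh : ∀ x : ℝ, HasDerivAt (fun x : ℝ => Real.sinh (δ * x)) (Real.cosh (δ * x) * δ) x := by
    intro x
    have := (Real.hasDerivAt_sinh (δ * x)).comp x ((hasDerivAt_id x).const_mul δ)
    simpa [Function.comp_def] using this
  have hDA : ∀ x : ℝ, HasDerivAt A (6 * AK * δ * Real.sinh (δ * x) * ((Real.cosh (δ * x))⁻¹) ^ 3) x := by
    intro x
    have h2 := ((hcosh x).inv (hc x)).pow 2
    have h3 := ((h2.const_mul (3:ℝ)).const_sub 1).const_mul AK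
    rw [hA]
    refine h3.congr_deriv ?_
    simp only [Pi.inv_apply, Pi.pow_apply]
    norm_num
    field_simp [hc x]
    ring
  have hBeq : B = fun x => 6 * AK * δ * Real.sinh (δ * x) * ((Real.cosh (δ * x))⁻¹) ^ 3 := by
    rw [hB]; funext x; exact (hDA x).deriv
  have hAK2 : b₁ * AK ^ 2 = -a₁ * μ - c₁ * K := by
    rw [hAK, Real.sq_sqrt hpos]; field_simp
  have hδ2 : δ ^ 2 = b₁ * AK / 2 := by
    rw [hδ]; exact Real.sq_sqrt (div_nonneg hAKb (by norm_num))
  have habs : ∀ x : ℝ, ‖C x‖ ^ 2 = K := by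
    intro x
    rw [hC]
    simp only [norm_mul, Complex.norm_exp, Complex.norm_real, Real.norm_eq_abs,
      abs_of_nonneg (Real.sqrt_nonneg K)]
    have : (Complex.I * (↑ω * ↑x + ↑φ)).re = 0 := by simp
    rw [this]
    simp [Real.sq_sqrt hK]
  refine ⟨fun x => ⟨?_, ?_, ?_⟩, ?_, ?_⟩
  · rw [hBeq]; exact hDA x
  · have h2 := ((hcosh x).inv (hc x)).pow 3
    have hmul := ((hsinh x).mul h2).const_mul (6 * AK * δ)
    rw [hBeq, hA, habs x]
    have hfun : (fun x => 6*AK*δ*Real.sinh (δ*x)*((Real.cosh (δ*x))⁻¹)^3)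
        = fun x => (6*AK*δ) * (Real.sinh (δ*x) * ((Real.cosh (δ*x))⁻¹)^3) := by
      funext y; ring
    rw [hfun]
    refine hmul.congr_deriv ?_
    have hs : Real.sinh (δ * x) ^ 2 = Real.cosh (δ * x) ^ 2 - 1 := by
      nlinarith [Real.cosh_sq_sub_sinh_sq (δ * x)]
    simp only [Pi.inv_apply, Pi.pow_apply]
    norm_num
    field_simp [hc x]
    linear_combination (-(Real.cosh (δ*x))^4) * hAK2 +
      (-18*AK*δ^2) * hs +
      6*AK*(3 - 2*(Real.cosh (δ*x))^2) * hδ2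
  · have hid : HasDerivAt (fun x : ℝ => (x : ℂ)) 1 x := by
      exact (hasDerivAt_id x).ofReal_comp
    have hg := (((hid.const_mul (ω:ℂ)).add_const (φ:ℂ)).const_mul Complex.I).cexp.const_mul
      ((Real.sqrt K : ℂ))
    rw [hC]
    refine hg.congr_deriv ?_
    ring
  · by_cases hAK0 : AK = 0
    · rw [hA, hAK0]; simp
    · have hδpos : 0 < δ := by
        rw [hδ]
        exact Real.sqrt_pos.mpr (div_pos (lt_of_le_of_ne hAKb (Ne.symm (mul_ne_zero hb hAK0))) two_pos)
      have hinv : Tendsto (fun x : ℝ => (Real.cosh (δ * x))⁻¹) atTop (nhds 0) :=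
        (cosh_top'.comp (tendsto_id.const_mul_atTop hδpos)).inv_tendsto_atTop
      have := (((hinv.pow 2).const_mul (3:ℝ)).const_sub 1).const_mul AK
      rw [hA]
      simpa using this
  · by_cases hAK0 : AK = 0
    · rw [hA, hAK0]; simp
    · have hδpos : 0 < δ := by
        rw [hδ]
        exact Real.sqrt_pos.mpr (div_pos (lt_of_le_of_ne hAKb (Ne.symm (mul_ne_zero hb hAK0))) two_pos)
      have hinv : Tendsto (fun x : ℝ => (Real.cosh (δ * x))⁻¹) atBot (nhds 0) :=
        (cosh_bot'.comp (tendsto_id.const_mul_atBot hδpos)).inv_tendsto_atTop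
      have := (((hinv.pow 2).const_mul (3:ℝ)).const_sub 1).const_mul AK
      rw [hA]
      simpa using this
end
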